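/- The translation efficiency function Λ(μ) = (Σ_{i=0}^m C(m,i)ℓ_i(μ/μ₀)^i)/(Σ_{i=0}^m C(m,i)β_i(μ/μ₀)^i) is strictly decreasing in μ on (0,∞) whenever ℓ_0 > ℓ_1 > ⋯ > ℓ_m ≥ 0 and 0 < β_0 < β_1 < ⋯ < β_m; in particular for m = 1, Λ(μ) = (ℓ_0 + ℓ_1 μ/μ₀)/(β_0 + β_1 μ/μ₀) is strictly decreasing when ℓ_0β_1 > ℓ_1β_0. -/

import Mathlib

open Finset Set

/-- The translation efficiency function Λ is strictly decreasing on (0,∞) when the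
translation rates are strictly decreasing and the degradation rates strictly increasing;
in particular for m = 1. -/
theorem translation_efficiency_strictAnti
    (m : ℕ) (hm : 1 ≤ m) (μ₀ : ℝ) (hμ₀ : 0 < μ₀)
    (ell beta : ℕ → ℝ)
    (hell_dec : ∀ i < m, ell (i + 1) < ell i) (hell_last : 0 ≤ ell m)
    (hbeta0 : 0 < beta 0) (hbeta_inc : ∀ i < m, beta i < beta (i + 1))
    (Lam : ℝ → ℝ)
    (hLam : ∀ μ, Lam μ =
      (∑ i ∈ Finset.range (m + 1), (m.choose i : ℝ) * ell i * (μ / μ₀) ^ i) /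
      (∑ i ∈ Finset.range (m + 1), (m.choose i : ℝ) * beta i * (μ / μ₀) ^ i)) :
    StrictAntiOn Lam (Set.Ioi 0) ∧
    (∀ l0 l1 b0 b1 : ℝ, 0 < b0 → 0 < b1 → l0 * b1 > l1 * b0 →
      StrictAntiOn (fun μ : ℝ => (l0 + l1 * (μ / μ₀)) / (b0 + b1 * (μ / μ₀)))
        (Set.Ioi 0)) := by
  -- monotonicity of ell (antitone) and beta (monotone) up to m
  have ell_anti : ∀ j, j ≤ m → ∀ i, i ≤ j → ell j ≤ ell i := by
    intro j
    induction j with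
    | zero =>
      intro _ i hi
      have : i = 0 := Nat.le_zero.mp hi
      subst this; exact le_rfl
    | succ n ih =>
      intro hj i hi
      rcases eq_or_lt_of_le hi with rfl | h
      · exact le_rfl
      · have h1 : ell (n + 1) < ell n := hell_dec n (by omega)
        have h2 := ih (by omega) i (by omega)
        linarith
  have beta_mono : ∀ j, j ≤ m → ∀ i, i ≤ j → beta i ≤ beta j := by
    intro j
    induction j with
    | zero =>
      intro _ i hi
      have : i = 0 := Nat.le_zero.mp hi
      subst this; exact le_rfl
    | succ n ih =>
      intro hj i hi
      rcases eq_or_lt_of_le hi with rfl | h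
      · exact le_rfl
      · have h1 : beta n < beta (n + 1) := hbeta_inc n (by omega)
        have h2 := ih (by omega) i (by omega)
        linarith
  have ell_strict : ∀ i j, i < j → j ≤ m → ell j < ell i := by
    intro i j hij hj
    have h1 : ell j ≤ ell (i + 1) := ell_anti j hj (i + 1) (by omega)
    have h2 : ell (i + 1) < ell i := hell_dec i (by omega)
    linarith
  have beta_strict : ∀ i j, i < j → j ≤ m → beta i < beta j := by
    intro i j hij hj
    have h1 : beta (i + 1) ≤ beta j := beta_mono j hj (i + 1) (by omega)
    have h2 : beta i < beta (i + 1) := hbeta_inc i (by omega)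
    linarith
  have ell_nonneg : ∀ i, i ≤ m → 0 ≤ ell i := fun i hi =>
    le_trans hell_last (ell_anti m le_rfl i hi)
  have beta_pos : ∀ i, i ≤ m → 0 < beta i := fun i hi =>
    lt_of_lt_of_le hbeta0 (beta_mono i hi 0 (Nat.zero_le i))
  -- denominator positivity
  have D_pos : ∀ x : ℝ, 0 < x →
      0 < ∑ i ∈ Finset.range (m + 1), (m.choose i : ℝ) * beta i * x ^ i := by
    intro x hx
    apply Finset.sum_pos
    · intro i hi
      have hi' : i ≤ m := by simpa [Nat.lt_succ_iff] using hi
      have hc : 0 < (m.choose i : ℝ) := by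
        exact_mod_cast Nat.choose_pos hi'
      exact mul_pos (mul_pos hc (beta_pos i hi')) (pow_pos hx i)
    · exact ⟨0, Finset.mem_range.mpr (by omega)⟩
  -- key cross-multiplied inequality
  have key : ∀ x y : ℝ, 0 < x → x < y →
      (∑ i ∈ Finset.range (m + 1), (m.choose i : ℝ) * ell i * y ^ i) *
        (∑ j ∈ Finset.range (m + 1), (m.choose j : ℝ) * beta j * x ^ j) <
      (∑ i ∈ Finset.range (m + 1), (m.choose i : ℝ) * ell i * x ^ i) *
        (∑ j ∈ Finset.range (m + 1), (m.choose j : ℝ) * beta j * y ^ j) := by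
    intro x y hx hxy
    have hy : 0 < y := hx.trans hxy
    set f : ℕ → ℕ → ℝ := fun i j =>
      ((m.choose i : ℝ) * ell i * x ^ i) * ((m.choose j : ℝ) * beta j * y ^ j) -
      ((m.choose i : ℝ) * ell i * y ^ i) * ((m.choose j : ℝ) * beta j * x ^ j) with hf
    have hpos : ∀ i j, i < j → j ≤ m → 0 < f i j + f j i := by
      intro i j hij hj
      have hi : i ≤ m := le_trans (le_of_lt hij) hj
      have key_eq : f i j + f j i =
          (m.choose i : ℝ) * (m.choose j : ℝ) *
            ((ell i * beta j - ell j * beta i) * (x ^ i * y ^ j - y ^ i * x ^ j)) := by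
        simp only [hf]; ring
      rw [key_eq]
      have hci : 0 < (m.choose i : ℝ) := by exact_mod_cast Nat.choose_pos hi
      have hcj : 0 < (m.choose j : ℝ) := by exact_mod_cast Nat.choose_pos hj
      have h1 : 0 < ell i * beta j - ell j * beta i := by
        have hl := ell_strict i j hij hj
        have hb := beta_strict i j hij hj
        have hlj := ell_nonneg j hj
        have hbi := beta_pos i hi
        nlinarith
      have h2 : 0 < x ^ i * y ^ j - y ^ i * x ^ j := by
        have e1 : y ^ j = y ^ i * y ^ (j - i) := by rw [← pow_add]; congr 1; omega
        have e2 : x ^ j = x ^ i * x ^ (j - i) := by rw [← pow_add]; congr 1; omega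
        rw [e1, e2]
        have h3 : x ^ (j - i) < y ^ (j - i) :=
          pow_lt_pow_left₀ hxy hx.le (by omega)
        have hxi : 0 < x ^ i := pow_pos hx i
        have hyi : 0 < y ^ i := pow_pos hy i
        nlinarith [mul_pos (mul_pos hxi hyi) (sub_pos.mpr h3)]
      exact mul_pos (mul_pos hci hcj) (mul_pos h1 h2)
    have hnonneg : ∀ i ∈ Finset.range (m + 1), ∀ j ∈ Finset.range (m + 1),
        0 ≤ f i j + f j i := by
      intro i hi j hj
      rw [Finset.mem_range] at hi hj
      rcases lt_trichotomy i j with h | rfl | h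
      · exact (hpos i j h (by omega)).le
      · have : f i i + f i i = 0 := by simp only [hf]; ring
        linarith
      · have := hpos j i h (by omega)
        linarith
    have hstrict : 0 < ∑ i ∈ Finset.range (m + 1), ∑ j ∈ Finset.range (m + 1),
        (f i j + f j i) := by
      apply Finset.sum_pos'
      · intro i hi
        exact Finset.sum_nonneg fun j hj => hnonneg i hi j hj
      · refine ⟨0, Finset.mem_range.mpr (by omega), ?_⟩
        apply Finset.sum_pos'
        · intro j hj
          exact hnonneg 0 (Finset.mem_range.mpr (by omega)) j hj
        · exact ⟨1, Finset.mem_range.mpr (by omega), hpos 0 1 (by omega) hm⟩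
    have hswap : ∑ i ∈ Finset.range (m + 1), ∑ j ∈ Finset.range (m + 1), f j i
        = ∑ i ∈ Finset.range (m + 1), ∑ j ∈ Finset.range (m + 1), f i j :=
      Finset.sum_comm
    have hsplit : ∑ i ∈ Finset.range (m + 1), ∑ j ∈ Finset.range (m + 1), (f i j + f j i)
        = (∑ i ∈ Finset.range (m + 1), ∑ j ∈ Finset.range (m + 1), f i j)
          + (∑ i ∈ Finset.range (m + 1), ∑ j ∈ Finset.range (m + 1), f j i) := by
      simp [Finset.sum_add_distrib]
    have hS : 0 < ∑ i ∈ Finset.range (m + 1), ∑ j ∈ Finset.range (m + 1), f i j := by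
      rw [hsplit, hswap] at hstrict
      linarith
    have hSeq : ∑ i ∈ Finset.range (m + 1), ∑ j ∈ Finset.range (m + 1), f i j
        = (∑ i ∈ Finset.range (m + 1), (m.choose i : ℝ) * ell i * x ^ i) *
            (∑ j ∈ Finset.range (m + 1), (m.choose j : ℝ) * beta j * y ^ j)
          - (∑ i ∈ Finset.range (m + 1), (m.choose i : ℝ) * ell i * y ^ i) *
            (∑ j ∈ Finset.range (m + 1), (m.choose j : ℝ) * beta j * x ^ j) := by
      simp only [hf]
      rw [Finset.sum_mul_sum, Finset.sum_mul_sum]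
      rw [← Finset.sum_sub_distrib]
      exact Finset.sum_congr rfl fun i _ => Finset.sum_sub_distrib _ _
    rw [hSeq] at hS
    linarith
  constructor
  · intro a ha b hb hab
    rw [Set.mem_Ioi] at ha hb
    rw [hLam a, hLam b]
    have hxa : 0 < a / μ₀ := div_pos ha hμ₀
    have hxb : 0 < b / μ₀ := div_pos hb hμ₀
    have hab' : a / μ₀ < b / μ₀ := by gcongr
    rw [div_lt_div_iff₀ (D_pos _ hxb) (D_pos _ hxa)]
    exact key _ _ hxa hab'
  · intro l0 l1 b0 b1 hb0 hb1 h a ha b hb hab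
    rw [Set.mem_Ioi] at ha hb
    have hxa : 0 < a / μ₀ := div_pos ha hμ₀
    have hxb : 0 < b / μ₀ := div_pos hb hμ₀
    have hab' : a / μ₀ < b / μ₀ := by gcongr
    have hda : 0 < b0 + b1 * (a / μ₀) := by positivity
    have hdb : 0 < b0 + b1 * (b / μ₀) := by positivity
    simp only
    rw [div_lt_div_iff₀ hdb hda]
    nlinarith [mul_pos (sub_pos.mpr h) (sub_pos.mpr hab')]
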